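/- Coboundary identity for products of sequence cocycles: let L be a graded Lie algebra (degree-shifted polyvector fields), and let (pᵢ) and (qⱼ) be families of elements of L with the property that [pᵢ, qⱼ] = 0 and pᵢ · qⱼ-type interactions vanish as in the paper (e.g., pᵢ ∈ ℝ[xᵢ,ξᵢ], qⱼ ∈ ℝ[xⱼ,ξⱼ] involving disjoint variables), each family locally finite on any fixed argument. Then the Chevalley–Eilenberg 2-cochain c(γ,ν) = Σᵢⱼ ±[pᵢ,γ][qⱼ,ν] ± Σᵢⱼ ±[pᵢ,ν][qⱼ,γ] (with Koszul signs as in the paper) is the Chevalley coboundary of the 1-cochain b(γ) = Σ_{i≤j} pᵢ[qⱼ,γ] - Σ_{i>j} ± qⱼ[pᵢ,γ]. In the simplest finite case with a single p and single q in disjoint variables (so [p,q]=0 and p,q Poisson-commute with each other's variables), verify: the 2-cocycle c(γ,ν) = ±[p,γ][q,ν] ± [p,ν][q,γ] equals the coboundary of b(γ) = p[q,γ]. -/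
import Mathlib


open MvPolynomial

/-- The (even model of the) space of polynomial polyvector fields on ℝⁿ:
polynomials in variables `x i = X (Sum.inl i)` and `ξ i = X (Sum.inr i)`. -/
abbrev Tpoly (n : ℕ) : Type := MvPolynomial (Fin n ⊕ Fin n) ℝ

noncomputable def xVar {n : ℕ} (i : Fin n) : Tpoly n := X (Sum.inl i)
noncomputable def xiVar {n : ℕ} (i : Fin n) : Tpoly n := X (Sum.inr i)

/-- The Schouten bracket, determined by `[ξ i, x j] = δ i j` and the
biderivation (Leibniz) property. -/
noncomputable def schouten {n : ℕ} (p q : Tpoly n) : Tpoly n :=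
  ∑ i : Fin n, (pderiv (Sum.inr i) p * pderiv (Sum.inl i) q
    - pderiv (Sum.inl i) p * pderiv (Sum.inr i) q)

/-- Bi-homogeneity: homogeneous of degree `r₁` in the x's and `r₂` in the ξ's. -/
def BiHomog {n : ℕ} (p : Tpoly n) (r₁ r₂ : ℕ) : Prop :=
  p.IsWeightedHomogeneous (Sum.elim (fun _ => (1 : ℕ)) fun _ => 0) r₁ ∧
  p.IsWeightedHomogeneous (Sum.elim (fun _ => (0 : ℕ)) fun _ => 1) r₂

/- Auxiliary lemmas -/

/-- Partial derivatives commute. -/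
lemma pd_comm {σ : Type*} {R : Type*} [CommSemiring R] (u v : σ)
    (f : MvPolynomial σ R) :
    pderiv u (pderiv v f) = pderiv v (pderiv u f) := by
  classical
  induction f using MvPolynomial.induction_on with
  | C a => simp [pderiv_C]
  | add p q hp hq => simp [hp, hq]
  | mul_X p m hp =>
    simp only [pderiv_mul, map_add, hp]
    rcases eq_or_ne m u with rfl | hu <;> rcases eq_or_ne m v with rfl | hv <;>
      simp [pderiv_X_self, pderiv_X_of_ne, pderiv_one, *, mul_comm]

lemma schouten_antisymm {n : ℕ} (a b : Tpoly n) : schouten a b = - schouten b a := by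
  have : schouten a b + schouten b a = 0 := by
    unfold schouten
    rw [← Finset.sum_add_distrib]
    apply Finset.sum_eq_zero
    intro k _
    ring
  exact eq_neg_of_add_eq_zero_left this

lemma schouten_add_right {n : ℕ} (a b c : Tpoly n) :
    schouten a (b + c) = schouten a b + schouten a c := by
  unfold schouten
  rw [← Finset.sum_add_distrib]
  apply Finset.sum_congr rfl
  intro k _
  simp only [map_add]
  ring

lemma schouten_zero_right {n : ℕ} (a : Tpoly n) : schouten a 0 = 0 := by
  unfold schouten
  apply Finset.sum_eq_zero
  intro k _
  simp

lemma schouten_neg_right {n : ℕ} (a b : Tpoly n) : schouten a (-b) = - schouten a b := by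
  unfold schouten
  rw [← Finset.sum_neg_distrib]
  apply Finset.sum_congr rfl
  intro k _
  simp only [map_neg]
  ring

lemma schouten_C_right {n : ℕ} (a : Tpoly n) (r : ℝ) : schouten a (C r) = 0 := by
  unfold schouten
  apply Finset.sum_eq_zero
  intro k _
  simp [pderiv_C]

lemma schouten_mul_right {n : ℕ} (a b c : Tpoly n) :
    schouten a (b * c) = schouten a b * c + b * schouten a c := by
  unfold schouten
  rw [Finset.sum_mul, Finset.mul_sum, ← Finset.sum_add_distrib]
  apply Finset.sum_congr rfl
  intro k _
  simp only [pderiv_mul]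
  ring

lemma schouten_X_inl {n : ℕ} (a : Tpoly n) (m : Fin n) :
    schouten a (X (Sum.inl m)) = pderiv (Sum.inr m) a := by
  unfold schouten
  rw [Finset.sum_eq_single m]
  · simp
  · intro k _ hk
    have h1 : (Sum.inl m : Fin n ⊕ Fin n) ≠ Sum.inl k := by simp [Ne, hk.symm]
    have h2 : (Sum.inl m : Fin n ⊕ Fin n) ≠ Sum.inr k := by simp
    simp [pderiv_X_of_ne h1, pderiv_X_of_ne h2]
  · intro h
    exact absurd (Finset.mem_univ m) h

lemma schouten_X_inr {n : ℕ} (a : Tpoly n) (m : Fin n) :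
    schouten a (X (Sum.inr m)) = - pderiv (Sum.inl m) a := by
  unfold schouten
  rw [Finset.sum_eq_single m]
  · simp
  · intro k _ hk
    have h1 : (Sum.inr m : Fin n ⊕ Fin n) ≠ Sum.inl k := by simp
    have h2 : (Sum.inr m : Fin n ⊕ Fin n) ≠ Sum.inr k := by simp [Ne, hk.symm]
    simp [pderiv_X_of_ne h1, pderiv_X_of_ne h2]
  · intro h
    exact absurd (Finset.mem_univ m) h

/-- pderiv is a derivation of the Schouten bracket. -/
lemma pderiv_schouten {n : ℕ} (u : Fin n ⊕ Fin n) (a b : Tpoly n) :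
    pderiv u (schouten a b) = schouten (pderiv u a) b + schouten a (pderiv u b) := by
  unfold schouten
  rw [map_sum, ← Finset.sum_add_distrib]
  apply Finset.sum_congr rfl
  intro k _
  simp only [map_sub, pderiv_mul]
  rw [pd_comm u (Sum.inr k) a, pd_comm u (Sum.inl k) a,
    pd_comm u (Sum.inr k) b, pd_comm u (Sum.inl k) b]
  ring

/-- Jacobi identity (Leibniz form) for the Schouten bracket. -/
lemma schouten_jacobi {n : ℕ} (a b c : Tpoly n) :
    schouten a (schouten b c) = schouten (schouten a b) c + schouten b (schouten a c) := by
  induction c using MvPolynomial.induction_on with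
  | C r => simp [schouten_C_right, schouten_zero_right]
  | add c₁ c₂ h₁ h₂ =>
    simp only [schouten_add_right, h₁, h₂]
    ring
  | mul_X c m hc =>
    have hx : schouten a (schouten b (X m)) =
        schouten (schouten a b) (X m) + schouten b (schouten a (X m)) := by
      rcases m with m | m
      · simp only [schouten_X_inl]
        rw [pderiv_schouten, schouten_antisymm b (pderiv (Sum.inr m) a)]
        ring
      · simp only [schouten_X_inr, schouten_neg_right]
        rw [pderiv_schouten, schouten_antisymm b (pderiv (Sum.inl m) a)]
        ring
    simp only [schouten_mul_right, schouten_add_right, hc, hx]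
    ring

/-- simplest finite case: for p, q in disjoint variables the
Schouten bracket [p,q] vanishes, and the Chevalley–Eilenberg 2-cocycle
`c(γ,ν) = [p,γ][q,ν] - [p,ν][q,γ]` is the coboundary of the 1-cochain
`b(γ) = p·[q,γ]`. -/
theorem sequence_cocycle_coboundary (n : ℕ) (i j : Fin n) (hij : i ≠ j)
    (p q : Tpoly n)
    (hp : (p.vars : Set (Fin n ⊕ Fin n)) ⊆ {Sum.inl i, Sum.inr i})
    (hq : (q.vars : Set (Fin n ⊕ Fin n)) ⊆ {Sum.inl j, Sum.inr j}) :
    schouten p q = 0 ∧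
    ∀ γ ν : Tpoly n,
      schouten p γ * schouten q ν - schouten p ν * schouten q γ =
        p * schouten q (schouten γ ν)
          + schouten ν (p * schouten q γ)
          - schouten γ (p * schouten q ν) := by
  constructor
  · unfold schouten
    apply Finset.sum_eq_zero
    intro k _
    by_cases hk : k = i
    · subst hk
      have h1 : pderiv (Sum.inl k) q = 0 := by
        apply pderiv_eq_zero_of_notMem_vars
        intro hmem
        have := hq hmem
        simp only [Set.mem_insert_iff, Set.mem_singleton_iff] at this
        rcases this with h | h
        · exact hij (Sum.inl.inj h)
        · exact Sum.inl_ne_inr h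
      have h2 : pderiv (Sum.inr k) q = 0 := by
        apply pderiv_eq_zero_of_notMem_vars
        intro hmem
        have := hq hmem
        simp only [Set.mem_insert_iff, Set.mem_singleton_iff] at this
        rcases this with h | h
        · exact Sum.inr_ne_inl h
        · exact hij (Sum.inr.inj h)
      simp [h1, h2]
    · have h1 : pderiv (Sum.inl k) p = 0 := by
        apply pderiv_eq_zero_of_notMem_vars
        intro hmem
        have := hp hmem
        simp only [Set.mem_insert_iff, Set.mem_singleton_iff] at this
        rcases this with h | h
        · exact hk (Sum.inl.inj h)
        · exact Sum.inl_ne_inr h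
      have h2 : pderiv (Sum.inr k) p = 0 := by
        apply pderiv_eq_zero_of_notMem_vars
        intro hmem
        have := hp hmem
        simp only [Set.mem_insert_iff, Set.mem_singleton_iff] at this
        rcases this with h | h
        · exact Sum.inr_ne_inl h
        · exact hk (Sum.inr.inj h)
      simp [h1, h2]
  · intro γ ν
    rw [show schouten q (schouten γ ν) = _ from schouten_jacobi q γ ν,
      schouten_mul_right ν p (schouten q γ), schouten_mul_right γ p (schouten q ν),
      schouten_antisymm ν p, schouten_antisymm γ p,
      schouten_antisymm (schouten q γ) ν]
    ring
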